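/- arXiv:math/0005022 — 2 statements merged into one kernel-verified Lean document; each statement's English description precedes it below -/
import Mathlib

section
/- Let B be a W-invariant inner product on V∨ normalized so that B(α∨, α∨) = 2 for every short coroot α∨ (in each irreducible component of R). If η ∈ Q∨₊, η ≠ 0 and B(η, η) ≤ 2, then η is a short coroot; in particular η = β∨ for some positive root β. -/
open scoped BigOperators Classical

noncomputable section

/-- Data of a finite crystallographic root system in a pair of vector spaces `V`, `V'`
(in perfect duality via `pair`), with a chosen base `Δ` and a cocharacter lattice `X`. -/
structure RootSystemData (V V' : Type) [AddCommGroup V] [Module ℝ V]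
    [FiniteDimensional ℝ V] [AddCommGroup V'] [Module ℝ V'] [FiniteDimensional ℝ V'] where
  /-- The canonical pairing between `V` and `V'`. -/
  pair : V →ₗ[ℝ] V' →ₗ[ℝ] ℝ
  /-- The (finite) set of roots. -/
  R : Finset V
  /-- The coroot attached to a root. -/
  coroot : V → V'
  root_ne_zero : ∀ α ∈ R, α ≠ (0 : V)
  neg_mem : ∀ α ∈ R, -α ∈ R
  coroot_neg : ∀ α ∈ R, coroot (-α) = -coroot α
  pair_self_eq_two : ∀ α ∈ R, pair α (coroot α) = 2
  crystallographic : ∀ α ∈ R, ∀ β ∈ R, ∃ n : ℤ, pair α (coroot β) = (n : ℝ)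
  reflect_root_mem : ∀ α ∈ R, ∀ β ∈ R, β - pair β (coroot α) • α ∈ R
  reflect_coroot_mem : ∀ α ∈ R, ∀ β ∈ R,
    coroot β - pair α (coroot β) • coroot α ∈ coroot '' R
  /-- The chosen base (set of simple roots). -/
  Δ : Finset V
  base_subset : Δ ⊆ R
  base_indep : LinearIndependent ℝ (fun a : (Δ : Set V) => (a : V))
  base_generates : ∀ α ∈ R,
    α ∈ AddSubmonoid.closure (Δ : Set V) ∨ -α ∈ AddSubmonoid.closure (Δ : Set V)
  /-- The lattice `X∨`. -/
  X : AddSubgroup V'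
  coroot_mem_X : ∀ α ∈ R, coroot α ∈ X
  X_le_span : (X : Set V') ⊆ (Submodule.span ℝ (coroot '' (R : Set V)) : Set V')
  pair_X_int : ∀ α ∈ R, ∀ x ∈ X, ∃ n : ℤ, pair α x = (n : ℝ)

namespace RootSystemData

variable {V V' : Type} [AddCommGroup V] [Module ℝ V] [FiniteDimensional ℝ V]
  [AddCommGroup V'] [Module ℝ V'] [FiniteDimensional ℝ V']
  (D : RootSystemData V V')

/-- The set `R₊` of positive roots: roots which are `ℕ`-linear combinations of the base. -/
def Rpos : Finset V := D.R.filter fun α => α ∈ AddSubmonoid.closure (D.Δ : Set V)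

/-- The coroot lattice `Q∨`. -/
def Qc : AddSubgroup V' := AddSubgroup.closure (D.coroot '' (D.R : Set V))

/-- The positive cone `Q∨₊` generated by the coroots of the positive roots. -/
def Qpos : AddSubmonoid V' := AddSubmonoid.closure (D.coroot '' (D.Rpos : Set V))

/-- The dominance order: `ν ≤ λ` iff `λ - ν ∈ Q∨₊`. -/
def leQ (ν lam : V') : Prop := lam - ν ∈ D.Qpos

/-- Dominance: `ν` is dominant iff `⟨α, ν⟩ ≥ 0` for every positive root `α`. -/
def Dominant (ν : V') : Prop := ∀ α ∈ D.Rpos, 0 ≤ D.pair α ν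

/-- The set `X∨₊` of dominant elements of the lattice. -/
def Xplus : Set V' := {x | x ∈ D.X ∧ D.Dominant x}

/-- The set `M` of minimal elements of `X∨₊ \ {0}` for the dominance order. -/
def MSet : Set V' :=
  {μ | μ ∈ D.Xplus ∧ μ ≠ 0 ∧ ∀ ν ∈ D.Xplus, ν ≠ 0 → D.leQ ν μ → ν = μ}

/-- The reflection on `V` attached to a root `α`. -/
def reflV (α : V) (hα : α ∈ D.R) : V ≃ₗ[ℝ] V :=
  Module.reflection (show D.pair.flip (D.coroot α) α = 2 from D.pair_self_eq_two α hα)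

/-- The reflection on `V'` attached to a root `α`. -/
def reflV' (α : V) (hα : α ∈ D.R) : V' ≃ₗ[ℝ] V' :=
  Module.reflection (show D.pair α (D.coroot α) = 2 from D.pair_self_eq_two α hα)

/-- The Weyl group `W`, acting simultaneously on `V` (first component)
and on `V'` (second component); it is generated by the pairs of reflections
attached to the roots. -/
def weyl : Subgroup ((V ≃ₗ[ℝ] V) × (V' ≃ₗ[ℝ] V')) :=
  Subgroup.closure {g | ∃ α, ∃ hα : α ∈ D.R, g = (D.reflV α hα, D.reflV' α hα)}

/-- The orbit `Wμ` of `μ ∈ V'` under the Weyl group. -/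
def Worbit (μ : V') : Set V' := {ν | ∃ g ∈ D.weyl, ν = g.2 μ}

/-- The set `Ω(λ) = {ν ∈ X∨ : wν ≤ λ for all w ∈ W}`. -/
def Omega (lam : V') : Set V' :=
  {ν | ν ∈ D.X ∧ ∀ g ∈ D.weyl, D.leQ (g.2 ν) lam}

/-- Two roots are linked when they are non-orthogonal. -/
def Linked (α β : V) : Prop := α ∈ D.R ∧ β ∈ D.R ∧ D.pair α (D.coroot β) ≠ 0

/-- Two roots lie in the same irreducible component iff they are connected by a
chain of non-orthogonal roots. -/
def SameComponent (α β : V) : Prop := Relation.EqvGen D.Linked α β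

/-- The half-sum `ρ` of the positive roots. -/
def rho : V := (2 : ℝ)⁻¹ • ∑ α ∈ D.Rpos, α

/-- A `W`-invariant inner product on `V'`. -/
structure WInvInner where
  form : V' →ₗ[ℝ] V' →ₗ[ℝ] ℝ
  symm : ∀ x y, form x y = form y x
  posdef : ∀ x, x ≠ 0 → 0 < form x x
  invariant : ∀ g ∈ D.weyl, ∀ x y, form (g.2 x) (g.2 y) = form x y

/-- `β` is a root whose coroot is short: for every `W`-invariant inner product `B` on `V'`,
`B(β∨, β∨) ≤ B(α∨, α∨)` for every root `α` in the same irreducible component as `β`. -/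
def IsShortCoroot (β : V) : Prop :=
  β ∈ D.R ∧ ∀ B : D.WInvInner, ∀ α ∈ D.R, D.SameComponent α β →
    B.form (D.coroot β) (D.coroot β) ≤ B.form (D.coroot α) (D.coroot α)

end RootSystemData

section Aux

namespace RootSystemData

variable {V V' : Type} [AddCommGroup V] [Module ℝ V] [FiniteDimensional ℝ V]
  [AddCommGroup V'] [Module ℝ V'] [FiniteDimensional ℝ V']
  (D : RootSystemData V V')

lemma coroot_ne_zero {α : V} (hα : α ∈ D.R) : D.coroot α ≠ 0 := by
  intro h
  have h2 := D.pair_self_eq_two α hα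
  rw [h] at h2
  simp at h2

lemma Rpos_subset : D.Rpos ⊆ D.R := Finset.filter_subset _ _

lemma mem_Rpos_iff {α : V} : α ∈ D.Rpos ↔ α ∈ D.R ∧ α ∈ AddSubmonoid.closure (D.Δ : Set V) :=
  Finset.mem_filter

variable (B : D.WInvInner)

lemma form_nonneg (x : V') : 0 ≤ B.form x x := by
  by_cases hx : x = 0
  · simp [hx]
  · exact (B.posdef x hx).le

lemma form_cs (x y : V') (hy : y ≠ 0) :
    (B.form x y) ^ 2 ≤ B.form x x * B.form y y := by
  have hd : 0 < B.form y y := B.posdef y hy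
  have h0 : 0 ≤ B.form (B.form y y • x - B.form x y • y) (B.form y y • x - B.form x y • y) :=
    D.form_nonneg B _
  simp only [map_sub, map_smul, LinearMap.sub_apply, LinearMap.smul_apply, smul_eq_mul] at h0
  have hs : B.form y x = B.form x y := B.symm y x
  rw [hs] at h0
  nlinarith [h0, hd, mul_pos hd hd, sq_nonneg (B.form x y)]

/-- generator of the Weyl group is in the Weyl group -/
lemma gen_mem_weyl {γ : V} (hγ : γ ∈ D.R) :
    (D.reflV γ hγ, D.reflV' γ hγ) ∈ D.weyl :=
  Subgroup.subset_closure ⟨γ, hγ, rfl⟩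

lemma reflV'_apply {γ : V} (hγ : γ ∈ D.R) (x : V') :
    D.reflV' γ hγ x = x - D.pair γ x • D.coroot γ := by
  rfl

/-- The fundamental relation between the pairing and any invariant form. -/
lemma ipl {γ : V} (hγ : γ ∈ D.R) (x : V') :
    2 * B.form (D.coroot γ) x = D.pair γ x * B.form (D.coroot γ) (D.coroot γ) := by
  have hinv := B.invariant _ (D.gen_mem_weyl hγ) x (D.coroot γ)
  rw [reflV'_apply, reflV'_apply, D.pair_self_eq_two γ hγ] at hinv
  have h2 : (2 : ℝ) • D.coroot γ = D.coroot γ + D.coroot γ := two_smul ℝ _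
  simp only [map_sub, map_smul, LinearMap.sub_apply, LinearMap.smul_apply, smul_eq_mul] at hinv
  have hs1 : B.form x (D.coroot γ) = B.form (D.coroot γ) x := B.symm x _
  nlinarith [hinv, hs1]

end RootSystemData

end Aux
section Aux2

namespace RootSystemData

variable {V V' : Type} [AddCommGroup V] [Module ℝ V] [FiniteDimensional ℝ V]
  [AddCommGroup V'] [Module ℝ V'] [FiniteDimensional ℝ V']
  (D : RootSystemData V V')

/-- There is a linear functional equal to `1` on every simple root. -/
lemma exists_phi : ∃ φ : V →ₗ[ℝ] ℝ, ∀ δ ∈ D.Δ, φ δ = 1 := by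
  classical
  have hli : LinearIndepOn ℝ id (D.Δ : Set V) := D.base_indep
  let b := Module.Basis.extend hli
  refine ⟨∑ δ ∈ D.Δ.attach, b.coord ⟨(δ : V), hli.subset_extend _ δ.2⟩, ?_⟩
  intro δ hδ
  rw [LinearMap.sum_apply]
  have hb : ∀ (x : V) (hx : x ∈ hli.extend (Set.subset_univ _)), b ⟨x, hx⟩ = x := by
    intro x hx
    exact Module.Basis.extend_apply_self hli ⟨x, hx⟩
  have key : ∀ ε : {x // x ∈ D.Δ},
      (b.coord ⟨(ε : V), hli.subset_extend _ ε.2⟩) δ = if ε = ⟨δ, hδ⟩ then 1 else 0 := by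
    intro ε
    have hδmem : δ ∈ hli.extend (Set.subset_univ _) := hli.subset_extend _ hδ
    have hδeq : δ = b ⟨δ, hδmem⟩ := (hb δ hδmem).symm
    rw [Module.Basis.coord_apply]
    conv_lhs => rw [hδeq]
    rw [Module.Basis.repr_self, Finsupp.single_apply]
    by_cases h : ε = ⟨δ, hδ⟩
    · rw [if_pos, if_pos h]
      exact Subtype.ext (congrArg Subtype.val h).symm
    · rw [if_neg, if_neg h]
      intro hc
      exact h (Subtype.ext (congrArg Subtype.val hc).symm)
  rw [Finset.sum_congr rfl (fun ε _ => key ε), Finset.sum_ite_eq' D.Δ.attach ⟨δ, hδ⟩ (fun _ => (1:ℝ))]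
  simp

lemma phi_pos {φ : V →ₗ[ℝ] ℝ} (hφ : ∀ δ ∈ D.Δ, φ δ = 1) {v : V}
    (hv : v ∈ AddSubmonoid.closure (D.Δ : Set V)) (hv0 : v ≠ 0) : 0 < φ v := by
  have key : ∀ w ∈ AddSubmonoid.closure (D.Δ : Set V), 0 ≤ φ w ∧ (w = 0 ∨ 1 ≤ φ w) := by
    intro w hw
    induction hw using AddSubmonoid.closure_induction with
    | mem x hx => exact ⟨by rw [hφ x hx]; norm_num, Or.inr (by rw [hφ x hx])⟩
    | zero => exact ⟨by simp, Or.inl rfl⟩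
    | add x y hx hy ihx ihy =>
        refine ⟨by rw [map_add]; linarith [ihx.1, ihy.1], ?_⟩
        rcases ihx.2 with h | h
        · rcases ihy.2 with h' | h'
          · exact Or.inl (by rw [h, h', add_zero])
          · exact Or.inr (by rw [map_add]; linarith [ihx.1])
        · exact Or.inr (by rw [map_add]; linarith [ihy.1])
  rcases (key v hv).2 with h | h
  · exact absurd h hv0
  · linarith

/-- KEY LEMMA: two positive roots with Cartan pairing product 4 and negative sign
produce infinitely many roots; contradiction. -/
lemma no_affine {x y : V} (hx : x ∈ D.Rpos) (hy : y ∈ D.Rpos)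
    (hprod : D.pair x (D.coroot y) * D.pair y (D.coroot x) = 4)
    (hneg : D.pair x (D.coroot y) < 0) : False := by
  classical
  obtain ⟨φ, hφ⟩ := D.exists_phi
  have hxR : x ∈ D.R := D.Rpos_subset hx
  have hyR : y ∈ D.R := D.Rpos_subset hy
  have hxC : x ∈ AddSubmonoid.closure (D.Δ : Set V) := (D.mem_Rpos_iff.mp hx).2
  have hyC : y ∈ AddSubmonoid.closure (D.Δ : Set V) := (D.mem_Rpos_iff.mp hy).2
  have hφx : 0 < φ x := D.phi_pos hφ hxC (D.root_ne_zero x hxR)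
  have hφy : 0 < φ y := D.phi_pos hφ hyC (D.root_ne_zero y hyR)
  set A : ℝ := D.pair x (D.coroot y) with hA
  set Bq : ℝ := D.pair y (D.coroot x) with hB
  have hBneg : Bq < 0 := by nlinarith
  set u : ℕ → V := fun k => ((2 * (k : ℝ) + 1)) • x + ((k : ℝ) * (-A)) • y with hu
  have humem : ∀ k, u k ∈ D.R := by
    intro k
    induction k with
    | zero => simpa [hu] using hxR
    | succ k ih =>
        have hpy : D.pair (u k) (D.coroot y) = A := by
          simp only [hu, map_add, map_smul, LinearMap.add_apply, LinearMap.smul_apply,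
            smul_eq_mul, D.pair_self_eq_two y hyR]
          ring
        have hv : u k - D.pair (u k) (D.coroot y) • y ∈ D.R :=
          D.reflect_root_mem y hyR (u k) ih
        rw [hpy] at hv
        have hveq : u k - A • y = (2 * (k : ℝ) + 1) • x + (((k : ℝ) + 1) * (-A)) • y := by
          simp only [hu]
          module
        rw [hveq] at hv
        have hpx : D.pair ((2 * (k : ℝ) + 1) • x + (((k : ℝ) + 1) * (-A)) • y)
            (D.coroot x) = -2 := by
          simp only [map_add, map_smul, LinearMap.add_apply, LinearMap.smul_apply,
            smul_eq_mul, D.pair_self_eq_two x hxR]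
          rw [← hB]
          nlinarith [hprod]
        have hw := D.reflect_root_mem x hxR _ hv
        rw [hpx] at hw
        have : (2 * (k : ℝ) + 1) • x + (((k : ℝ) + 1) * (-A)) • y - (-2 : ℝ) • x
            = u (k + 1) := by
          simp only [hu]
          push_cast
          module
        rwa [this] at hw
  have hmono : StrictMono (fun k => φ (u k)) := by
    have hval : ∀ k, φ (u k) = (2 * (k : ℝ) + 1) * φ x + ((k : ℝ) * (-A)) * φ y := by
      intro k
      simp [hu, map_add, map_smul, smul_eq_mul]
    intro a b hab
    have hab' : (a : ℝ) < (b : ℝ) := by exact_mod_cast hab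
    show φ (u a) < φ (u b)
    rw [hval a, hval b]
    nlinarith [mul_pos (sub_pos.mpr hab') hφx,
      mul_nonneg (mul_nonneg (sub_pos.mpr hab').le (neg_nonneg.mpr hneg.le)) hφy.le]
  have hinj : Function.Injective u := by
    intro a b hab
    have : φ (u a) = φ (u b) := by rw [hab]
    exact hmono.injective this
  have hinf : (↑D.R : Set V).Infinite :=
    Set.infinite_of_injective_forall_mem hinj (fun k => by exact humem k)
  exact hinf (D.R.finite_toSet)

end RootSystemData

end Aux2
section Aux3

namespace RootSystemData

variable {V V' : Type} [AddCommGroup V] [Module ℝ V] [FiniteDimensional ℝ V]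
  [AddCommGroup V'] [Module ℝ V'] [FiniteDimensional ℝ V']
  (D : RootSystemData V V')

/-- Ratio transfer: norms of coroots in the same component have the same ratio
for any two invariant forms. -/
lemma ratio_transfer (B B' : D.WInvInner) {α β : V} (h : D.SameComponent α β) :
    α = β ∨ (α ∈ D.R ∧ β ∈ D.R ∧
      B'.form (D.coroot α) (D.coroot α) * B.form (D.coroot β) (D.coroot β) =
      B.form (D.coroot α) (D.coroot α) * B'.form (D.coroot β) (D.coroot β)) := by
  induction h with
  | rel a b hab =>
      obtain ⟨haR, hbR, hne⟩ := hab
      refine Or.inr ⟨haR, hbR, ?_⟩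
      have e1 := D.ipl B haR (D.coroot b)
      have e2 := D.ipl B hbR (D.coroot a)
      have e1' := D.ipl B' haR (D.coroot b)
      have e2' := D.ipl B' hbR (D.coroot a)
      have hs : B.form (D.coroot a) (D.coroot b) = B.form (D.coroot b) (D.coroot a) :=
        B.symm _ _
      have hs' : B'.form (D.coroot a) (D.coroot b) = B'.form (D.coroot b) (D.coroot a) :=
        B'.symm _ _
      -- p * B_a = q * B_b  and  p * B'_a = q * B'_b with p ≠ 0
      have key : ∀ z : ℝ, D.pair a (D.coroot b) * z = 0 → z = 0 := fun z hz =>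
        (mul_eq_zero.mp hz).resolve_left hne
      have h1 : D.pair a (D.coroot b) * B.form (D.coroot a) (D.coroot a) =
          D.pair b (D.coroot a) * B.form (D.coroot b) (D.coroot b) := by
        rw [← e1, ← e2, hs]
      have h2 : D.pair a (D.coroot b) * B'.form (D.coroot a) (D.coroot a) =
          D.pair b (D.coroot a) * B'.form (D.coroot b) (D.coroot b) := by
        rw [← e1', ← e2', hs']
      have := key (B'.form (D.coroot a) (D.coroot a) * B.form (D.coroot b) (D.coroot b) -
        B.form (D.coroot a) (D.coroot a) * B'.form (D.coroot b) (D.coroot b))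
        (by linear_combination B.form (D.coroot b) (D.coroot b) * h2 -
          B'.form (D.coroot b) (D.coroot b) * h1)
      linarith
  | refl a => exact Or.inl rfl
  | symm a b _ ih =>
      rcases ih with h | ⟨ha, hb, heq⟩
      · exact Or.inl h.symm
      · exact Or.inr ⟨hb, ha, by linarith [heq]⟩
  | trans a b c _ _ ih1 ih2 =>
      rcases ih1 with h | ⟨ha, hb, heq1⟩
      · rwa [h]
      · rcases ih2 with h' | ⟨_, hc, heq2⟩
        · rw [← h']; exact Or.inr ⟨ha, hb, heq1⟩
        · refine Or.inr ⟨ha, hc, ?_⟩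
          have hbpos : 0 < B.form (D.coroot b) (D.coroot b) :=
            B.posdef _ (D.coroot_ne_zero hb)
          have hbpos' : 0 < B'.form (D.coroot b) (D.coroot b) :=
            B'.posdef _ (D.coroot_ne_zero hb)
          have hmul := congrArg₂ (· * ·) heq1 heq2
          have hc0 : B.form (D.coroot b) (D.coroot b) *
              B'.form (D.coroot b) (D.coroot b) ≠ 0 :=
            ne_of_gt (mul_pos hbpos hbpos')
          apply mul_left_cancel₀ hc0
          nlinarith [hmul]

/-- With the normalization `hnorm`, every coroot has norm at least 2. -/
lemma norm_ge_two (B : D.WInvInner)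
    (hnorm : ∀ α ∈ D.R, D.IsShortCoroot α → B.form (D.coroot α) (D.coroot α) = 2)
    {α : V} (hα : α ∈ D.R) : 2 ≤ B.form (D.coroot α) (D.coroot α) := by
  classical
  set C : Finset V := D.R.filter (fun α' => D.SameComponent α' α) with hC
  have hαC : α ∈ C := by
    rw [hC, Finset.mem_filter]
    exact ⟨hα, Relation.EqvGen.refl α⟩
  obtain ⟨σ, hσC, hσmin⟩ := C.exists_min_image
    (fun α' => B.form (D.coroot α') (D.coroot α')) ⟨α, hαC⟩
  have hσR : σ ∈ D.R := (Finset.mem_filter.mp hσC).1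
  have hσcomp : D.SameComponent σ α := (Finset.mem_filter.mp hσC).2
  have hshort : D.IsShortCoroot σ := by
    refine ⟨hσR, fun B' α' hα' hcomp => ?_⟩
    have hα'C : α' ∈ C := by
      rw [hC, Finset.mem_filter]
      exact ⟨hα', Relation.EqvGen.trans _ _ _ hcomp hσcomp⟩
    have hle := hσmin α' hα'C
    rcases D.ratio_transfer B B' hcomp with h | ⟨_, _, heq⟩
    · rw [h]
    -- heq : B'_α' * B_σ = B_α' * B'_σ ; need B'_σ ≤ B'_α'
    · have h1 : 0 < B.form (D.coroot α') (D.coroot α') := B.posdef _ (D.coroot_ne_zero hα')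
      have h2 : 0 < B'.form (D.coroot α') (D.coroot α') := B'.posdef _ (D.coroot_ne_zero hα')
      nlinarith [heq, hle, h1, h2]
  have h2 := hnorm σ hσR hshort
  have := hσmin α hαC
  linarith

/-- Integrality of the pairing on sums of coroots of positive roots. -/
lemma pair_multiset_int {γ : V} (hγ : γ ∈ D.R) (T : Multiset V')
    (hT : ∀ c ∈ T, c ∈ D.coroot '' (↑D.Rpos : Set V)) :
    ∃ n : ℤ, D.pair γ T.sum = (n : ℝ) := by
  induction T using Multiset.induction with
  | empty => exact ⟨0, by simp⟩
  | cons c T ih =>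
      obtain ⟨n, hn⟩ := ih (fun c' hc' => hT c' (Multiset.mem_cons_of_mem hc'))
      obtain ⟨δ, hδ, hδeq⟩ := hT c (Multiset.mem_cons_self c T)
      obtain ⟨m, hm⟩ := D.crystallographic γ hγ δ (D.Rpos_subset hδ)
      refine ⟨m + n, ?_⟩
      rw [Multiset.sum_cons, map_add, ← hδeq, hm, hn]
      push_cast
      ring

end RootSystemData

end Aux3
section Aux4

namespace RootSystemData

variable {V V' : Type} [AddCommGroup V] [Module ℝ V] [FiniteDimensional ℝ V]
  [AddCommGroup V'] [Module ℝ V'] [FiniteDimensional ℝ V']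
  (D : RootSystemData V V')

lemma bad_case (B : D.WInvInner)
    (hnorm : ∀ α ∈ D.R, D.IsShortCoroot α → B.form (D.coroot α) (D.coroot α) = 2)
    {β γ μ : V} (hβ : β ∈ D.Rpos) (hγ : γ ∈ D.Rpos) (hμ : μ ∈ D.Rpos)
    (hp : D.pair β (D.coroot γ) = -1)
    (hrel : D.coroot μ = -(D.coroot β + D.coroot γ))
    (hle : B.form (D.coroot β + D.coroot γ) (D.coroot β + D.coroot γ) ≤ 2) : False := by
  have hβR : β ∈ D.R := D.Rpos_subset hβ
  have hγR : γ ∈ D.R := D.Rpos_subset hγ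
  have hμR : μ ∈ D.R := D.Rpos_subset hμ
  set a : ℝ := B.form (D.coroot β) (D.coroot β) with ha
  set g : ℝ := B.form (D.coroot γ) (D.coroot γ) with hg
  set c : ℝ := B.form (D.coroot β) (D.coroot γ) with hc
  have hcsym : B.form (D.coroot γ) (D.coroot β) = c := B.symm _ _
  have ha2 : 2 ≤ a := D.norm_ge_two B hnorm hβR
  have hg2 : 2 ≤ g := D.norm_ge_two B hnorm hγR
  -- c = -a/2
  have hcval : 2 * c = -a := by
    have := D.ipl B hβR (D.coroot γ)
    rw [hp] at this
    linarith
  -- B(η,η) = a + g + 2c = g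
  have hBη : B.form (D.coroot β + D.coroot γ) (D.coroot β + D.coroot γ) = g := by
    simp only [map_add, LinearMap.add_apply]
    rw [hcsym, ← hc, ← ha, ← hg]
    linarith
  have hgval : g = 2 := le_antisymm (by linarith [hle, hBη]) hg2
  -- B_μ = 2
  have hm : B.form (D.coroot μ) (D.coroot μ) = 2 := by
    simp only [hrel, map_neg, LinearMap.neg_apply, neg_neg]
    rw [hBη, hgval]
  -- k' = pair μ (coroot β) = -a/2
  have hμβ : B.form (D.coroot μ) (D.coroot β) = -(a + c) := by
    simp only [hrel, map_neg, LinearMap.neg_apply, map_add, LinearMap.add_apply]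
    rw [hcsym, ← ha]
  set k : ℝ := D.pair μ (D.coroot β) with hk
  have hkval : k = -(a + c) := by
    have := D.ipl B hμR (D.coroot β)
    rw [hm, hμβ] at this
    linarith
  have hkneg : k < 0 := by
    rw [hkval]
    linarith
  obtain ⟨nk, hnk⟩ := D.crystallographic μ hμR β hβR
  -- w := μ - k • β ∈ Rpos
  have hwR : μ - k • β ∈ D.R := D.reflect_root_mem β hβR μ hμR
  set w : V := μ - k • β with hw
  have hwC : w ∈ AddSubmonoid.closure (D.Δ : Set V) := by
    have hnkneg : nk < 0 := by
      have : (nk : ℝ) < 0 := by rw [← hnk, ← hk]; exact hkneg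
      exact_mod_cast this
    obtain ⟨n, hn⟩ : ∃ n : ℕ, nk = -(n : ℤ) := ⟨(-nk).toNat, by omega⟩
    have hkn : k = -(n : ℝ) := by
      rw [hk, hnk, hn]; push_cast; ring
    have hweq : w = μ + n • β := by
      rw [hw, hkn, neg_smul, sub_neg_eq_add, Nat.cast_smul_eq_nsmul]
    rw [hweq]
    exact AddSubmonoid.add_mem _ (D.mem_Rpos_iff.mp hμ).2
      (AddSubmonoid.nsmul_mem _ (D.mem_Rpos_iff.mp hβ).2 n)
  have hwpos : w ∈ D.Rpos := D.mem_Rpos_iff.mpr ⟨hwR, hwC⟩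
  -- pair w x = - pair γ x for every x
  have hfun : ∀ x : V', D.pair w x = - D.pair γ x := by
    intro x
    have h1 : D.pair w x = D.pair μ x - k * D.pair β x := by
      rw [hw]
      simp only [map_sub, map_smul, LinearMap.sub_apply, LinearMap.smul_apply, smul_eq_mul]
    have hμx : D.pair μ x = B.form (D.coroot μ) x := by
      have := D.ipl B hμR x
      rw [hm] at this
      linarith
    have hβx : D.pair β x * a = 2 * B.form (D.coroot β) x := (D.ipl B hβR x).symm
    have hγx : 2 * D.pair γ x = 2 * B.form (D.coroot γ) x := by
      have := D.ipl B hγR x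
      rw [← hg, hgval] at this
      linarith
    have hμexp : B.form (D.coroot μ) x =
        -(B.form (D.coroot β) x + B.form (D.coroot γ) x) := by
      rw [hrel, map_neg, LinearMap.neg_apply, map_add, LinearMap.add_apply]
    rw [h1, hμx, hμexp, hkval]
    linear_combination (1/2) * hβx + (1/2) * (D.pair β x) * hcval + (1/2) * hγx
  -- apply the key lemma to (w, γ)
  have hA : D.pair w (D.coroot γ) = -2 := by
    rw [hfun (D.coroot γ), D.pair_self_eq_two γ hγR]
  have hBq : D.pair γ (D.coroot w) = -2 := by
    have := hfun (D.coroot w)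
    rw [D.pair_self_eq_two w hwR] at this
    linarith
  exact D.no_affine hwpos hγ (by rw [hA, hBq]; norm_num) (by rw [hA]; norm_num)

end RootSystemData

end Aux4
section Aux5

namespace RootSystemData

variable {V V' : Type} [AddCommGroup V] [Module ℝ V] [FiniteDimensional ℝ V]
  [AddCommGroup V'] [Module ℝ V'] [FiniteDimensional ℝ V']
  (D : RootSystemData V V')

lemma step_aux (B : D.WInvInner)
    (hnorm : ∀ α ∈ D.R, D.IsShortCoroot α → B.form (D.coroot α) (D.coroot α) = 2)
    {β γ : V} (hβ : β ∈ D.Rpos) (hγ : γ ∈ D.Rpos)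
    (hle : B.form (D.coroot β + D.coroot γ) (D.coroot β + D.coroot γ) ≤ 2)
    (hp : D.pair β (D.coroot γ) = -1) :
    ∃ δ ∈ D.Rpos, D.coroot β + D.coroot γ = D.coroot δ := by
  have hβR : β ∈ D.R := D.Rpos_subset hβ
  have hγR : γ ∈ D.R := D.Rpos_subset hγ
  have hmem := D.reflect_coroot_mem β hβR γ hγR
  rw [hp, neg_smul, one_smul, sub_neg_eq_add] at hmem
  obtain ⟨δ, hδR, hδeq⟩ := hmem
  rcases D.base_generates δ hδR with hposδ | hnegδ
  · exact ⟨δ, D.mem_Rpos_iff.mpr ⟨hδR, hposδ⟩, by rw [hδeq]; abel⟩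
  · exfalso
    have hμR : -δ ∈ D.R := D.neg_mem δ hδR
    have hμpos : -δ ∈ D.Rpos := D.mem_Rpos_iff.mpr ⟨hμR, hnegδ⟩
    have hrel : D.coroot (-δ) = -(D.coroot β + D.coroot γ) := by
      rw [D.coroot_neg δ hδR, hδeq]
      abel_nf
    exact D.bad_case B hnorm hβ hγ hμpos hp hrel hle

lemma step (B : D.WInvInner)
    (hnorm : ∀ α ∈ D.R, D.IsShortCoroot α → B.form (D.coroot α) (D.coroot α) = 2)
    {β γ : V} (hβ : β ∈ D.Rpos) (hγ : γ ∈ D.Rpos)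
    (hle : B.form (D.coroot β + D.coroot γ) (D.coroot β + D.coroot γ) ≤ 2) :
    ∃ δ ∈ D.Rpos, D.coroot β + D.coroot γ = D.coroot δ := by
  have hβR : β ∈ D.R := D.Rpos_subset hβ
  have hγR : γ ∈ D.R := D.Rpos_subset hγ
  set a : ℝ := B.form (D.coroot β) (D.coroot β) with ha
  set g : ℝ := B.form (D.coroot γ) (D.coroot γ) with hg
  set c : ℝ := B.form (D.coroot β) (D.coroot γ) with hc
  have hcsym : B.form (D.coroot γ) (D.coroot β) = c := B.symm _ _
  have ha2 : 2 ≤ a := D.norm_ge_two B hnorm hβR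
  have hg2 : 2 ≤ g := D.norm_ge_two B hnorm hγR
  have hexp : B.form (D.coroot β + D.coroot γ) (D.coroot β + D.coroot γ)
      = a + 2 * c + g := by
    simp only [map_add, LinearMap.add_apply]
    rw [hcsym, ← ha, ← hc, ← hg]
    ring
  have hcneg : c ≤ -1 := by
    rw [hexp] at hle
    linarith
  set p : ℝ := D.pair β (D.coroot γ) with hpdef
  set q : ℝ := D.pair γ (D.coroot β) with hqdef
  have hpa : 2 * c = p * a := D.ipl B hβR (D.coroot γ)
  have hqg : 2 * c = q * g := by
    have := D.ipl B hγR (D.coroot β)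
    rw [hcsym] at this
    exact this
  obtain ⟨np, hnp⟩ := D.crystallographic β hβR γ hγR
  obtain ⟨nq, hnq⟩ := D.crystallographic γ hγR β hβR
  have hpneg : p < 0 := by nlinarith
  have hqneg : q < 0 := by nlinarith
  by_cases hp1 : p = -1
  · exact D.step_aux B hnorm hβ hγ hle hp1
  by_cases hq1 : q = -1
  · obtain ⟨δ, hδ, hδeq⟩ := D.step_aux B hnorm hγ hβ (by rwa [add_comm]) hq1
    exact ⟨δ, hδ, by rw [← hδeq]; abel⟩
  · exfalso
    -- p ≤ -2, q ≤ -2, so p*q ≥ 4; Cauchy-Schwarz gives p*q ≤ 4; so p*q = 4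
    have hnpneg : np ≤ -2 := by
      have h1 : (np : ℝ) < 0 := by rw [← hnp, ← hpdef]; exact hpneg
      have h2 : np < 0 := by exact_mod_cast h1
      have h3 : np ≠ -1 := fun h => hp1 (by rw [hpdef, hnp, h]; norm_num)
      omega
    have hnqneg : nq ≤ -2 := by
      have h1 : (nq : ℝ) < 0 := by rw [← hnq, ← hqdef]; exact hqneg
      have h2 : nq < 0 := by exact_mod_cast h1
      have h3 : nq ≠ -1 := fun h => hq1 (by rw [hqdef, hnq, h]; norm_num)
      omega
    have hpq4 : 4 ≤ p * q := by
      have : (4 : ℤ) ≤ np * nq := by nlinarith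
      have h4 : (4 : ℝ) ≤ (np : ℝ) * (nq : ℝ) := by exact_mod_cast this
      rwa [← hnp, ← hnq, ← hpdef, ← hqdef] at h4
    have hcs : c ^ 2 ≤ a * g := D.form_cs B _ _ (D.coroot_ne_zero hγR)
    have hpqle : p * q ≤ 4 := by
      have hapos : (0:ℝ) < a := by linarith
      have hgpos : (0:ℝ) < g := by linarith
      have h4c : (p * q) * (a * g) = 4 * c ^ 2 := by
        have := congrArg₂ (· * ·) hpa hqg
        nlinarith [this]
      nlinarith [hcs, mul_pos hapos hgpos]
    have hpq : p * q = 4 := le_antisymm hpqle hpq4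
    exact D.no_affine hβ hγ (by rw [← hpdef, ← hqdef]; exact hpq)
      (by rw [← hpdef]; exact hpneg)

end RootSystemData

end Aux5
section Aux6

namespace RootSystemData

variable {V V' : Type} [AddCommGroup V] [Module ℝ V] [FiniteDimensional ℝ V]
  [AddCommGroup V'] [Module ℝ V'] [FiniteDimensional ℝ V']
  (D : RootSystemData V V')

lemma form_sum_apply (B : D.WInvInner) (T : Multiset V') (x : V') :
    B.form T.sum x = (T.map (fun c => B.form c x)).sum := by
  induction T using Multiset.induction with
  | empty => simp
  | cons c T ih =>
      simp only [Multiset.sum_cons, Multiset.map_cons, map_add, LinearMap.add_apply, ih]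

lemma exists_multiset_of_mem_Qpos {η : V'} (hη : η ∈ D.Qpos) :
    ∃ T : Multiset V', (∀ c ∈ T, c ∈ D.coroot '' (↑D.Rpos : Set V)) ∧ T.sum = η := by
  induction hη using AddSubmonoid.closure_induction with
  | mem x hx => exact ⟨{x}, by simpa using hx, by simp⟩
  | zero => exact ⟨0, by simp, by simp⟩
  | add x y _ _ ihx ihy =>
      obtain ⟨T1, hT1, hs1⟩ := ihx
      obtain ⟨T2, hT2, hs2⟩ := ihy
      refine ⟨T1 + T2, ?_, by rw [Multiset.sum_add, hs1, hs2]⟩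
      intro c hc
      rcases Multiset.mem_add.mp hc with h | h
      · exact hT1 c h
      · exact hT2 c h

lemma multiset_sum_nonpos (T : Multiset ℝ) (h : ∀ z ∈ T, z ≤ 0) : T.sum ≤ 0 := by
  induction T using Multiset.induction with
  | empty => simp
  | cons c T ih =>
      rw [Multiset.sum_cons]
      have h1 := h c (Multiset.mem_cons_self c T)
      have h2 := ih (fun z hz => h z (Multiset.mem_cons_of_mem hz))
      linarith

lemma main_induction (B : D.WInvInner)
    (hnorm : ∀ α ∈ D.R, D.IsShortCoroot α → B.form (D.coroot α) (D.coroot α) = 2) :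
    ∀ n : ℕ, ∀ T : Multiset V', T.card = n →
      (∀ c ∈ T, c ∈ D.coroot '' (↑D.Rpos : Set V)) → T.sum ≠ 0 →
      B.form T.sum T.sum ≤ 2 → ∃ β ∈ D.Rpos, T.sum = D.coroot β := by
  intro n
  induction n using Nat.strong_induction_on with
  | _ n ih =>
    intro T hcard hT hne hle
    have hpos : 0 < B.form T.sum T.sum := B.posdef _ hne
    have hex : ∃ c ∈ T, 0 < B.form c T.sum := by
      by_contra h
      push_neg at h
      have hsum : ((T.map (fun c => B.form c T.sum)).sum) ≤ 0 := by
        apply multiset_sum_nonpos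
        intro z hz
        obtain ⟨c, hcT, rfl⟩ := Multiset.mem_map.mp hz
        exact h c hcT
      rw [D.form_sum_apply B T T.sum] at hpos
      linarith
    obtain ⟨c, hcT, hc⟩ := hex
    obtain ⟨γ, hγmem, hγeq⟩ := hT c hcT
    have hγpos : γ ∈ D.Rpos := hγmem
    have hγR : γ ∈ D.R := D.Rpos_subset hγpos
    set T' : Multiset V' := T.erase c with hT'def
    have hcons : c ::ₘ T' = T := Multiset.cons_erase hcT
    have hsplit : T.sum = c + T'.sum := by rw [← hcons, Multiset.sum_cons]
    obtain ⟨m, hm⟩ := D.pair_multiset_int hγR T hT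
    set g : ℝ := B.form (D.coroot γ) (D.coroot γ) with hg
    have hg2 : 2 ≤ g := D.norm_ge_two B hnorm hγR
    have hipl : 2 * B.form c T.sum = (m : ℝ) * g := by
      rw [← hγeq, D.ipl B hγR T.sum, ← hm, ← hg]
    have hm1 : (1 : ℝ) ≤ (m : ℝ) := by
      have hmpos : (0:ℝ) < (m:ℝ) * g := by linarith
      have : (0:ℤ) < m := by
        by_contra hcon
        push_neg at hcon
        have : ((m:ℝ)) ≤ 0 := by exact_mod_cast hcon
        nlinarith
      exact_mod_cast this
    by_cases hz : T'.sum = 0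
    · exact ⟨γ, hγpos, by rw [hsplit, hz, add_zero, hγeq]⟩
    · have hT'mem : ∀ c' ∈ T', c' ∈ D.coroot '' (↑D.Rpos : Set V) :=
        fun c' hc' => hT c' (Multiset.mem_of_mem_erase hc')
      have hcardlt : T'.card < n := by
        rw [← hcard, hT'def, Multiset.card_erase_of_mem hcT]
        exact Nat.pred_lt (by
          intro h0
          rw [Multiset.card_eq_zero.mp h0] at hcT
          simp at hcT)
      have hT'le : B.form T'.sum T'.sum ≤ 2 := by
        have hsub : T'.sum = T.sum - c := by rw [hsplit]; abel
        have hexp : B.form T'.sum T'.sum =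
            B.form T.sum T.sum - 2 * B.form c T.sum + B.form c c := by
          rw [hsub]
          simp only [map_sub, LinearMap.sub_apply]
          have : B.form T.sum c = B.form c T.sum := B.symm _ _
          linarith
        have hcc : B.form c c = g := by rw [← hγeq, ← hg]
        rw [hexp, hcc, hipl]
        nlinarith
      obtain ⟨β, hβpos, hβeq⟩ := ih T'.card hcardlt T' rfl hT'mem hz hT'le
      have hηeq : T.sum = D.coroot β + D.coroot γ := by
        rw [hsplit, hβeq, ← hγeq]
        abel
      obtain ⟨δ, hδpos, hδeq⟩ := D.step B hnorm hβpos hγpos (by rw [← hηeq]; exact hle)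
      exact ⟨δ, hδpos, by rw [hηeq, hδeq]⟩

end RootSystemData

end Aux6
theorem short_norm_le_two_is_short_coroot {V V' : Type} [AddCommGroup V] [Module ℝ V] [FiniteDimensional ℝ V]
    [AddCommGroup V'] [Module ℝ V'] [FiniteDimensional ℝ V']
    (D : RootSystemData V V')
    (B : D.WInvInner)
    (hnorm : ∀ α ∈ D.R, D.IsShortCoroot α → B.form (D.coroot α) (D.coroot α) = 2)
    (η : V') (hη : η ∈ D.Qpos) (hne : η ≠ 0) (hle : B.form η η ≤ 2) :
    ∃ β ∈ D.Rpos, D.IsShortCoroot β ∧ η = D.coroot β := by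
  obtain ⟨T, hT, hTsum⟩ := D.exists_multiset_of_mem_Qpos hη
  obtain ⟨β, hβpos, hβeq⟩ := D.main_induction B hnorm T.card T rfl hT
    (by rw [hTsum]; exact hne) (by rw [hTsum]; exact hle)
  rw [hTsum] at hβeq
  have hβR : β ∈ D.R := D.Rpos_subset hβpos
  have hβnorm : B.form (D.coroot β) (D.coroot β) ≤ 2 := by
    rw [← hβeq]; exact hle
  refine ⟨β, hβpos, ⟨hβR, ?_⟩, hβeq⟩
  intro B' α hα hcomp
  rcases D.ratio_transfer B B' hcomp with h | ⟨_, _, heq⟩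
  · rw [h]
  · have hαnorm : 2 ≤ B.form (D.coroot α) (D.coroot α) := D.norm_ge_two B hnorm hα
    have h1 : 0 < B.form (D.coroot α) (D.coroot α) := B.posdef _ (D.coroot_ne_zero hα)
    have h2 : 0 < B'.form (D.coroot α) (D.coroot α) := B'.posdef _ (D.coroot_ne_zero hα)
    nlinarith [heq, hβnorm, hαnorm, h1, h2]

end
end

section
/- For every χ ∈ X∨ there exists μ ∈ M ∪ {0} such that χ − μ ∈ Q∨. In other words, M ∪ {0} contains a system of representatives of the quotient group X∨/Q∨. -/
open scoped BigOperators Classical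

noncomputable section

namespace RootSystemData

variable {V V' : Type} [AddCommGroup V] [Module ℝ V] [FiniteDimensional ℝ V]
  [AddCommGroup V'] [Module ℝ V'] [FiniteDimensional ℝ V']
  {D : RootSystemData V V'}

lemma mem_R_of_mem_Rpos {α : V} (h : α ∈ D.Rpos) : α ∈ D.R :=
  (Finset.mem_filter.mp h).1

lemma mem_closure_of_mem_Rpos {α : V} (h : α ∈ D.Rpos) :
    α ∈ AddSubmonoid.closure (D.Δ : Set V) :=
  (Finset.mem_filter.mp h).2

lemma mem_Rpos_of {α : V} (h1 : α ∈ D.R) (h2 : α ∈ AddSubmonoid.closure (D.Δ : Set V)) :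
    α ∈ D.Rpos :=
  Finset.mem_filter.mpr ⟨h1, h2⟩

lemma base_mem_Rpos {β : V} (h : β ∈ D.Δ) : β ∈ D.Rpos :=
  mem_Rpos_of (D.base_subset h) (AddSubmonoid.subset_closure (by exact_mod_cast h))

/-- Every element of the closure of the base is an `ℕ`-combination of the base. -/
lemma mem_closure_repr {x : V} (hx : x ∈ AddSubmonoid.closure (D.Δ : Set V)) :
    ∃ c : V → ℕ, x = ∑ a ∈ D.Δ, (c a : ℝ) • a := by
  induction hx using AddSubmonoid.closure_induction with
  | mem a ha =>
    refine ⟨fun v => if v = a then 1 else 0, ?_⟩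
    rw [Finset.sum_eq_single a]
    · simp
    · intro b _ hba; simp [hba]
    · intro h; exact absurd (by exact_mod_cast ha) h
  | zero => exact ⟨fun _ => 0, by simp⟩
  | add x y hx hy ihx ihy =>
    obtain ⟨cx, hcx⟩ := ihx
    obtain ⟨cy, hcy⟩ := ihy
    refine ⟨fun v => cx v + cy v, ?_⟩
    rw [hcx, hcy, ← Finset.sum_add_distrib]
    refine Finset.sum_congr rfl fun a _ => ?_
    push_cast
    rw [add_smul]

/-- Coefficient extraction from the linear independence of the base. -/
lemma coeff_eq_zero {r : V → ℝ} (h : ∑ a ∈ D.Δ, r a • a = 0) : ∀ a ∈ D.Δ, r a = 0 := by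
  intro a ha
  have hmem : a ∈ (D.Δ : Set V) := by exact_mod_cast ha
  have hsum : ∑ i : (D.Δ : Set V), r i • (i : V) = 0 := by
    rw [Finset.sum_finset_coe (fun a => r a • a) D.Δ]
    exact h
  exact linearIndependent_iff'.mp D.base_indep Finset.univ (fun i => r (i : V)) hsum
    ⟨a, hmem⟩ (Finset.mem_univ _)

lemma eq_zero_of_mem_neg_mem {x : V} (hx : x ∈ AddSubmonoid.closure (D.Δ : Set V))
    (hx' : -x ∈ AddSubmonoid.closure (D.Δ : Set V)) : x = 0 := by
  obtain ⟨cx, hcx⟩ := mem_closure_repr hx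
  obtain ⟨cy, hcy⟩ := mem_closure_repr hx'
  have h0 : ∑ a ∈ D.Δ, ((cx a : ℝ) + (cy a : ℝ)) • a = 0 := by
    simp only [add_smul]
    rw [Finset.sum_add_distrib, ← hcx, ← hcy, add_neg_cancel]
  have hz := coeff_eq_zero h0
  rw [hcx]
  refine Finset.sum_eq_zero fun a ha => ?_
  have h1 := hz a ha
  have h2 : (cx a : ℝ) = 0 := by
    have := Nat.cast_nonneg (α := ℝ) (cx a)
    have := Nat.cast_nonneg (α := ℝ) (cy a)
    linarith
  rw [h2, zero_smul]

lemma not_neg_mem_Rpos {β : V} (hβ : β ∈ D.Rpos) : -β ∉ D.Rpos := by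
  intro h
  exact D.root_ne_zero β (mem_R_of_mem_Rpos hβ)
    (eq_zero_of_mem_neg_mem (mem_closure_of_mem_Rpos hβ) (mem_closure_of_mem_Rpos h))

lemma neg_mem_Rpos_of_not_mem {α : V} (hα : α ∈ D.R) (h : α ∉ D.Rpos) : -α ∈ D.Rpos := by
  rcases D.base_generates α hα with hc | hc
  · exact absurd (mem_Rpos_of hα hc) h
  · exact mem_Rpos_of (D.neg_mem α hα) hc

/-- Key combinatorial lemma: if `x + y = c • β` with `x, y` nonneg combinations of the base
and `β` in the base, then `x` is an `ℕ`-multiple of `β`. -/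
lemma eq_nsmul_of_add_eq_smul {β x y : V} (hβ : β ∈ D.Δ)
    (hx : x ∈ AddSubmonoid.closure (D.Δ : Set V))
    (hy : y ∈ AddSubmonoid.closure (D.Δ : Set V)) {c : ℝ}
    (hxy : x + y = c • β) : ∃ n : ℕ, x = (n : ℝ) • β := by
  obtain ⟨cx, hcx⟩ := mem_closure_repr hx
  obtain ⟨cy, hcy⟩ := mem_closure_repr hy
  have hone : ∑ a ∈ D.Δ, (if a = β then c else 0) • a = c • β := by
    rw [Finset.sum_eq_single β]
    · simp
    · intro b _ hbβ; simp [hbβ]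
    · intro h; exact absurd hβ h
  have h0 : ∑ a ∈ D.Δ, ((cx a : ℝ) + (cy a : ℝ) - (if a = β then c else 0)) • a = 0 := by
    simp only [sub_smul, add_smul]
    rw [Finset.sum_sub_distrib, Finset.sum_add_distrib, ← hcx, ← hcy, hone, hxy, sub_self]
  have hz := coeff_eq_zero h0
  refine ⟨cx β, ?_⟩
  rw [hcx, Finset.sum_eq_single β]
  · intro b hb hbβ
    have h1 := hz b hb
    rw [if_neg hbβ, sub_zero] at h1
    have h2 : (cx b : ℝ) = 0 := by
      have := Nat.cast_nonneg (α := ℝ) (cx b)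
      have := Nat.cast_nonneg (α := ℝ) (cy b)
      linarith
    rw [h2, zero_smul]
  · intro h; exact absurd hβ h

/-- If a positive root is reflected by a simple root `β` out of the positive roots,
it is a positive multiple of `β`. -/
lemma reflect_not_pos_eq_nsmul {β α : V} (hβ : β ∈ D.Δ) (hα : α ∈ D.Rpos)
    (h : α - D.pair α (D.coroot β) • β ∉ D.Rpos) :
    ∃ n : ℕ, 0 < n ∧ α = (n : ℝ) • β := by
  have hβR : β ∈ D.R := D.base_subset hβ
  have hαR : α ∈ D.R := mem_R_of_mem_Rpos hα
  have hrefl : α - D.pair α (D.coroot β) • β ∈ D.R := D.reflect_root_mem β hβR α hαR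
  have hneg : -(α - D.pair α (D.coroot β) • β) ∈ D.Rpos := neg_mem_Rpos_of_not_mem hrefl h
  have hsum : α + -(α - D.pair α (D.coroot β) • β) = D.pair α (D.coroot β) • β := by abel
  obtain ⟨n, hn⟩ := eq_nsmul_of_add_eq_smul hβ (mem_closure_of_mem_Rpos hα)
    (mem_closure_of_mem_Rpos hneg) hsum
  refine ⟨n, ?_, hn⟩
  rcases Nat.eq_zero_or_pos n with h0 | h0
  · exfalso
    apply D.root_ne_zero α hαR
    rw [hn, h0]; simp
  · exact h0

/-- The key functional: sum of the pairings with all positive roots. -/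
def Ff (D : RootSystemData V V') : V' →ₗ[ℝ] ℝ := ∑ α ∈ D.Rpos, D.pair α

lemma Ff_apply (x : V') : D.Ff x = ∑ α ∈ D.Rpos, D.pair α x := by
  simp [Ff, LinearMap.sum_apply, Finset.sum_apply]

/-- If a positive root is reflected by a positive root `β` out of the positive roots,
then it pairs positively with `β∨`. -/
lemma reflect_not_pos_pairing_pos {β α : V} (hβ : β ∈ D.Rpos) (hα : α ∈ D.Rpos)
    (h : α - D.pair α (D.coroot β) • β ∉ D.Rpos) : 0 < D.pair α (D.coroot β) := by
  by_contra hle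
  push_neg at hle
  apply h
  have hβR : β ∈ D.R := mem_R_of_mem_Rpos hβ
  have hαR : α ∈ D.R := mem_R_of_mem_Rpos hα
  refine mem_Rpos_of (D.reflect_root_mem β hβR α hαR) ?_
  obtain ⟨z, hz⟩ := D.crystallographic α hαR β hβR
  have hz0 : z ≤ 0 := by exact_mod_cast hz ▸ hle
  have : α - D.pair α (D.coroot β) • β = α + (-z).toNat • β := by
    rw [hz]
    have : ((-z).toNat : ℤ) = -z := Int.toNat_of_nonneg (by omega)
    rw [← Nat.cast_smul_eq_nsmul ℝ, ← Int.cast_natCast, this]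
    push_cast
    module
  rw [this]
  exact AddSubmonoid.add_mem _ (mem_closure_of_mem_Rpos hα)
    (AddSubmonoid.nsmul_mem _ (mem_closure_of_mem_Rpos hβ) _)

lemma Ff_coroot_pos {β : V} (hβ : β ∈ D.Rpos) : 0 < D.Ff (D.coroot β) := by
  classical
  have hβR : β ∈ D.R := mem_R_of_mem_Rpos hβ
  set c : V → ℝ := fun α => D.pair α (D.coroot β) with hc
  set sb : V → V := fun α => α - c α • β with hsb
  have hpair2 : D.pair β (D.coroot β) = 2 := D.pair_self_eq_two β hβR
  have hcsb : ∀ α, c (sb α) = - c α := by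
    intro α
    simp only [hsb, hc, map_sub, map_smul, LinearMap.sub_apply, LinearMap.smul_apply,
      smul_eq_mul, hpair2]
    ring
  have hsbsb : ∀ α, sb (sb α) = α := by
    intro α
    simp only [hsb]
    rw [show c (α - c α • β) = - c α from hcsb α]
    module
  rw [Ff_apply]
  rw [← Finset.sum_filter_add_sum_filter_not D.Rpos (fun α => sb α ∈ D.Rpos)]
  have h1 : ∑ α ∈ D.Rpos.filter (fun α => sb α ∈ D.Rpos), D.pair α (D.coroot β) = 0 := by
    refine Finset.sum_involution (fun a _ => sb a) ?_ ?_ ?_ ?_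
    · intro a _
      show c a + c (sb a) = 0
      rw [hcsb a]
      ring
    · intro a _ hne heq
      apply hne
      have heq' : sb a = a := heq
      have : a - sb a = c a • β := by simp [hsb]
      rw [heq', sub_self] at this
      rcases smul_eq_zero.mp this.symm with h | h
      · exact h
      · exact absurd h (D.root_ne_zero β hβR)
    · intro a ha
      have ha' := Finset.mem_filter.mp ha
      show sb a ∈ Finset.filter (fun α => sb α ∈ D.Rpos) D.Rpos
      refine Finset.mem_filter.mpr ⟨ha'.2, ?_⟩
      rw [hsbsb a]
      exact ha'.1
    · intro a _
      show sb (sb a) = a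
      exact hsbsb a
  rw [h1, zero_add]
  refine Finset.sum_pos ?_ ⟨β, ?_⟩
  · intro α hα
    have hα' := Finset.mem_filter.mp hα
    exact reflect_not_pos_pairing_pos hβ hα'.1 hα'.2
  · refine Finset.mem_filter.mpr ⟨hβ, ?_⟩
    have : sb β = -β := by
      simp only [hsb, hc, hpair2]
      module
    rw [this]
    exact not_neg_mem_Rpos hβ

lemma Qpos_le_Qc : ∀ q ∈ D.Qpos, q ∈ D.Qc := by
  intro q hq
  refine AddSubmonoid.closure_le.mpr ?_ hq
  intro x hx
  obtain ⟨α, hα, rfl⟩ := hx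
  exact AddSubgroup.subset_closure ⟨α, by exact_mod_cast mem_R_of_mem_Rpos (by exact_mod_cast hα), rfl⟩

lemma coroot_mem_Qc {α : V} (hα : α ∈ D.R) : D.coroot α ∈ D.Qc :=
  AddSubgroup.subset_closure ⟨α, by exact_mod_cast hα, rfl⟩

lemma Ff_Qpos_nonneg : ∀ q ∈ D.Qpos, 0 ≤ D.Ff q ∧ (q = 0 ∨ 0 < D.Ff q) := by
  intro q hq
  induction hq using AddSubmonoid.closure_induction with
  | mem x hx =>
    obtain ⟨α, hα, rfl⟩ := hx
    have := Ff_coroot_pos (D := D) (by exact_mod_cast hα)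
    exact ⟨le_of_lt this, Or.inr this⟩
  | zero => simp
  | add x y hx hy ihx ihy =>
    refine ⟨by rw [map_add]; linarith [ihx.1, ihy.1], ?_⟩
    rcases ihx.2 with h | h
    · rcases ihy.2 with h' | h'
      · exact Or.inl (by rw [h, h', add_zero])
      · exact Or.inr (by rw [map_add]; linarith [ihx.1])
    · exact Or.inr (by rw [map_add]; linarith [ihy.1])

lemma Ff_pos_of_ne_zero {q : V'} (hq : q ∈ D.Qpos) (h0 : q ≠ 0) : 0 < D.Ff q := by
  rcases (Ff_Qpos_nonneg q hq).2 with h | h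
  · exact absurd h h0
  · exact h

lemma Ff_int {x : V'} (hx : x ∈ D.X) : ∃ z : ℤ, D.Ff x = (z : ℝ) := by
  have : ∀ α ∈ D.Rpos, ∃ z : ℤ, D.pair α x = (z : ℝ) := fun α hα =>
    D.pair_X_int α (mem_R_of_mem_Rpos hα) x hx
  choose g hg using this
  refine ⟨∑ α ∈ D.Rpos.attach, g α α.2, ?_⟩
  rw [Ff_apply, ← Finset.sum_attach D.Rpos (fun α => D.pair α x)]
  push_cast
  exact Finset.sum_congr rfl fun a _ => hg a a.2

lemma Ff_nonneg_of_dominant {x : V'} (hx : D.Dominant x) : 0 ≤ D.Ff x := by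
  rw [Ff_apply]
  exact Finset.sum_nonneg fun α hα => hx α hα

lemma dominant_of_base_nonneg {ν : V'} (h : ∀ a ∈ D.Δ, 0 ≤ D.pair a ν) : D.Dominant ν := by
  intro α hα
  have hcl := mem_closure_of_mem_Rpos hα
  clear hα
  induction hcl using AddSubmonoid.closure_induction with
  | mem a ha => exact h a (by exact_mod_cast ha)
  | zero => simp
  | add x y hx hy ihx ihy =>
    rw [map_add, LinearMap.add_apply]
    linarith

/-- Descent: every element of the lattice is congruent mod `Q∨` to a dominant one. -/
lemma exists_dominant (ν : V') (hν : ν ∈ D.X) :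
    ∃ ν', ν' ∈ D.X ∧ D.Dominant ν' ∧ ν' - ν ∈ D.Qc := by
  classical
  have key : ∀ k : ℕ, ∀ ν : V', ν ∈ D.X →
      (D.Rpos.filter fun α => D.pair α ν < 0).card ≤ k →
      ∃ ν', ν' ∈ D.X ∧ D.Dominant ν' ∧ ν' - ν ∈ D.Qc := by
    intro k
    induction k with
    | zero =>
      intro ν hν hcard
      refine ⟨ν, hν, ?_, by simpa using D.Qc.zero_mem⟩
      intro α hα
      by_contra hneg
      push_neg at hneg
      have : α ∈ D.Rpos.filter fun α => D.pair α ν < 0 := Finset.mem_filter.mpr ⟨hα, hneg⟩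
      have := Finset.card_pos.mpr ⟨α, this⟩
      omega
    | succ k ih =>
      intro ν hν hcard
      by_cases hd : D.Dominant ν
      · exact ⟨ν, hν, hd, by simpa using D.Qc.zero_mem⟩
      · -- find a simple root pairing negatively
        have hbase : ∃ β ∈ D.Δ, D.pair β ν < 0 := by
          by_contra hno
          push_neg at hno
          exact hd (dominant_of_base_nonneg hno)
        obtain ⟨β, hβΔ, hβν⟩ := hbase
        have hβR : β ∈ D.R := D.base_subset hβΔ
        have hβpos : β ∈ D.Rpos := base_mem_Rpos hβΔ
        obtain ⟨m, hm⟩ := D.pair_X_int β hβR ν hν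
        set ν₂ : V' := ν - D.pair β ν • D.coroot β with hν₂
        have hν₂X : ν₂ ∈ D.X := by
          rw [hν₂, hm, Int.cast_smul_eq_zsmul]
          exact D.X.sub_mem hν (D.X.zsmul_mem (D.coroot_mem_X β hβR) m)
        have hν₂Q : ν₂ - ν ∈ D.Qc := by
          rw [hν₂, hm, Int.cast_smul_eq_zsmul]
          have : ν - m • D.coroot β - ν = -(m • D.coroot β) := by abel
          rw [this]
          exact D.Qc.neg_mem (D.Qc.zsmul_mem (coroot_mem_Qc hβR) m)
        -- the pairing identity
        have hid : ∀ α : V, D.pair α ν₂ = D.pair (α - D.pair α (D.coroot β) • β) ν := by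
          intro α
          simp only [hν₂, map_sub, map_smul, LinearMap.sub_apply, LinearMap.smul_apply,
            smul_eq_mul]
          ring
        -- the cardinality decreases
        set A := D.Rpos.filter fun α => D.pair α ν₂ < 0 with hA
        set B := D.Rpos.filter fun α => D.pair α ν < 0 with hB
        have hβB : β ∈ B := Finset.mem_filter.mpr ⟨hβpos, hβν⟩
        set ψ : V → V := fun α =>
          if α - D.pair α (D.coroot β) • β ∈ D.Rpos then α - D.pair α (D.coroot β) • β
          else α with hψ
        have hmaps : ∀ α ∈ A, ψ α ∈ B.erase β := by
          intro α hαA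
          obtain ⟨hαpos, hαν₂⟩ := Finset.mem_filter.mp hαA
          have h2 : D.pair β (D.coroot β) = 2 := D.pair_self_eq_two β hβR
          by_cases hr : α - D.pair α (D.coroot β) • β ∈ D.Rpos
          · have hψα : ψ α = α - D.pair α (D.coroot β) • β := if_pos hr
            refine Finset.mem_erase.mpr ⟨?_, ?_⟩
            · rw [hψα]
              intro heq
              -- pair both sides of heq with coroot β
              have hpr := congrArg (fun v => D.pair v (D.coroot β)) heq
              simp only [map_sub, map_smul, LinearMap.sub_apply, LinearMap.smul_apply,
                smul_eq_mul, h2] at hpr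
              have hc : D.pair α (D.coroot β) = -2 := by linarith
              have hαval : α = β + D.pair α (D.coroot β) • β := sub_eq_iff_eq_add.mp heq
              rw [hc] at hαval
              have hαnegβ : α = -β := by rw [hαval]; module
              exact not_neg_mem_Rpos hβpos (hαnegβ ▸ hαpos)
            · rw [hψα]
              exact Finset.mem_filter.mpr ⟨hr, by rw [← hid]; exact hαν₂⟩
          · have hψα : ψ α = α := if_neg hr
            obtain ⟨n, hn0, hn⟩ := reflect_not_pos_eq_nsmul hβΔ hαpos hr
            have hαν : D.pair α ν < 0 := by
              rw [hn, map_smul, LinearMap.smul_apply, smul_eq_mul]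
              exact mul_neg_of_pos_of_neg (by exact_mod_cast hn0) hβν
            refine Finset.mem_erase.mpr ⟨?_, ?_⟩
            · rw [hψα]
              intro heq
              -- α = β, but then s_β α = -β ∉ Rpos, and pairing condition fails
              rw [heq] at hαν₂
              rw [hid β] at hαν₂
              have hsββ : β - D.pair β (D.coroot β) • β = -β := by rw [h2]; module
              rw [hsββ, map_neg, LinearMap.neg_apply] at hαν₂
              linarith
            · rw [hψα]
              exact Finset.mem_filter.mpr ⟨hαpos, hαν⟩
        have hinj : Set.InjOn ψ A := by
          intro a₁ h₁ a₂ h₂ heq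
          have h₁p := (Finset.mem_filter.mp h₁).1
          have h₂p := (Finset.mem_filter.mp h₂).1
          have hselfinv : ∀ a : V, (a - D.pair a (D.coroot β) • β) -
              D.pair (a - D.pair a (D.coroot β) • β) (D.coroot β) • β = a := by
            intro a
            have h2 : D.pair β (D.coroot β) = 2 := D.pair_self_eq_two β hβR
            simp only [map_sub, map_smul, LinearMap.sub_apply, LinearMap.smul_apply,
              smul_eq_mul, h2]
            module
          by_cases hr₁ : a₁ - D.pair a₁ (D.coroot β) • β ∈ D.Rpos <;>
            by_cases hr₂ : a₂ - D.pair a₂ (D.coroot β) • β ∈ D.Rpos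
          · rw [hψ] at heq
            simp only [if_pos hr₁, if_pos hr₂] at heq
            have := congrArg (fun x => x - D.pair x (D.coroot β) • β) heq
            simpa only [hselfinv] using this
          · rw [hψ] at heq
            simp only [if_pos hr₁, if_neg hr₂] at heq
            exfalso
            apply hr₂
            have : a₂ - D.pair a₂ (D.coroot β) • β = a₁ := by
              rw [← heq, hselfinv]
            rw [this]; exact h₁p
          · rw [hψ] at heq
            simp only [if_neg hr₁, if_pos hr₂] at heq
            exfalso
            apply hr₁
            have : a₁ - D.pair a₁ (D.coroot β) • β = a₂ := by
              rw [heq, hselfinv]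
            rw [this]; exact h₂p
          · rw [hψ] at heq
            simpa only [if_neg hr₁, if_neg hr₂] using heq
        have hcardA : A.card ≤ k := by
          have h1 : A.card ≤ (B.erase β).card :=
            Finset.card_le_card_of_injOn ψ hmaps (by
              intro a ha b hb hab
              exact hinj (by exact_mod_cast ha) (by exact_mod_cast hb) hab)
          have h2 : (B.erase β).card = B.card - 1 := Finset.card_erase_of_mem hβB
          have h3 : 1 ≤ B.card := Finset.card_pos.mpr ⟨β, hβB⟩
          omega
        obtain ⟨ν', hν'X, hν'dom, hν'Q⟩ := ih ν₂ hν₂X hcardA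
        refine ⟨ν', hν'X, hν'dom, ?_⟩
        have : ν' - ν = (ν' - ν₂) + (ν₂ - ν) := by abel
        rw [this]
        exact D.Qc.add_mem hν'Q hν₂Q
  exact key _ ν hν le_rfl

end RootSystemData

theorem M_represents_X_mod_Q {V V' : Type} [AddCommGroup V] [Module ℝ V] [FiniteDimensional ℝ V]
    [AddCommGroup V'] [Module ℝ V'] [FiniteDimensional ℝ V']
    (D : RootSystemData V V')
    (χ : V') (hχ : χ ∈ D.X) :
    ∃ μ, (μ ∈ D.MSet ∨ μ = 0) ∧ χ - μ ∈ D.Qc := by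
  classical
  by_cases hQ : χ ∈ D.Qc
  · exact ⟨0, Or.inr rfl, by simpa using hQ⟩
  · obtain ⟨ν₀, hν₀X, hν₀dom, hν₀Q⟩ := RootSystemData.exists_dominant χ hχ
    set S : V' → Prop := fun ν => ν ∈ D.X ∧ D.Dominant ν ∧ ν - χ ∈ D.Qc with hS
    have hPex : ∃ k : ℕ, ∃ ν, S ν ∧ D.Ff ν = (k : ℝ) := by
      obtain ⟨z, hz⟩ := RootSystemData.Ff_int hν₀X
      have hz0 : (0 : ℝ) ≤ (z : ℝ) := hz ▸ RootSystemData.Ff_nonneg_of_dominant hν₀dom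
      refine ⟨z.toNat, ν₀, ⟨hν₀X, hν₀dom, hν₀Q⟩, ?_⟩
      rw [hz]
      congr 1
      exact_mod_cast (Int.toNat_of_nonneg (by exact_mod_cast hz0)).symm
    set k₀ := Nat.find hPex with hk₀
    obtain ⟨μ, hμS, hμF⟩ := Nat.find_spec hPex
    obtain ⟨hμX, hμdom, hμQ⟩ := hμS
    have hμ0 : μ ≠ 0 := by
      intro h
      apply hQ
      have : -χ ∈ D.Qc := by simpa [h] using hμQ
      simpa using D.Qc.neg_mem this
    refine ⟨μ, Or.inl ⟨⟨hμX, hμdom⟩, hμ0, ?_⟩, ?_⟩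
    · intro ν hν hν0 hle
      obtain ⟨hνX, hνdom⟩ := hν
      by_contra hne
      have hsub : μ - ν ∈ D.Qpos := hle
      have hsub0 : μ - ν ≠ 0 := sub_ne_zero.mpr (fun h => hne h.symm)
      have hpos : 0 < D.Ff (μ - ν) := RootSystemData.Ff_pos_of_ne_zero hsub hsub0
      have hlt : D.Ff ν < D.Ff μ := by
        have : D.Ff (μ - ν) = D.Ff μ - D.Ff ν := by rw [map_sub]
        linarith [this ▸ hpos]
      obtain ⟨z, hz⟩ := RootSystemData.Ff_int hνX
      have hz0 : (0 : ℝ) ≤ (z : ℝ) := hz ▸ RootSystemData.Ff_nonneg_of_dominant hνdom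
      have hνS : S ν := by
        refine ⟨hνX, hνdom, ?_⟩
        have h1 : ν - μ ∈ D.Qc := by
          have := D.Qc.neg_mem (RootSystemData.Qpos_le_Qc _ hsub)
          simpa using this
        have : ν - χ = (ν - μ) + (μ - χ) := by abel
        rw [this]
        exact D.Qc.add_mem h1 hμQ
      have hklt : z.toNat < k₀ := by
        have hzeq : D.Ff ν = (z.toNat : ℝ) := by
          rw [hz]
          congr 1
          exact_mod_cast (Int.toNat_of_nonneg (by exact_mod_cast hz0)).symm
        have : (z.toNat : ℝ) < (k₀ : ℝ) := by rw [← hzeq, ← hμF]; exact hlt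
        exact_mod_cast this
      exact Nat.find_min hPex hklt ⟨ν, hνS, by
        rw [hz]
        congr 1
        exact_mod_cast (Int.toNat_of_nonneg (by exact_mod_cast hz0)).symm⟩
    · have := D.Qc.neg_mem hμQ
      simpa using this

end
end
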